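/- Let a, v ∈ ℝⁿ (n ≥ 2) with all components of v non-zero. A real number u minimizes t ↦ ‖a - t·v‖_∞ if and only if there exist distinct indices i, j such that |aᵢ - u·vᵢ| = |aⱼ - u·vⱼ| = ‖a - u·v‖_∞ and sign(vᵢ(aᵢ - u·vᵢ)) = -sign(vⱼ(aⱼ - u·vⱼ)). -/
import Mathlib


open Filter

/-- A vector is Chebyshev if all of its components are non-zero. -/
def Cheb {n : ℕ} (v : Fin n → ℝ) : Prop := ∀ i, v i ≠ 0

/-- `mu a v` is the (unique, when `v` is Chebyshev) minimizer of `u ↦ ‖a - u • v‖`,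
where `‖·‖` is the sup-norm on `Fin n → ℝ`. -/
noncomputable def mu {n : ℕ} (a v : Fin n → ℝ) : ℝ :=
  Classical.epsilon fun t : ℝ => ∀ u : ℝ, ‖a - t • v‖ ≤ ‖a - u • v‖

noncomputable def phi {m n : ℕ} (A : Fin m → Fin n → ℝ) (v : Fin n → ℝ) : Fin m → ℝ :=
  fun i => mu (A i) v

noncomputable def psi {m n : ℕ} (A : Fin m → Fin n → ℝ) (u : Fin m → ℝ) : Fin n → ℝ :=
  fun j => mu (fun i => A i j) u

/-- `A` preserves Chebyshev systems. -/
def PreservesCheb {m n : ℕ} (A : Fin m → Fin n → ℝ) : Prop :=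
  (∀ v : Fin n → ℝ, Cheb v → Cheb (phi A v)) ∧ (∀ u : Fin m → ℝ, Cheb u → Cheb (psi A u))

/-- A vector is alternance-free if exactly one component attains the max absolute value. -/
def AlternanceFree {n : ℕ} (a : Fin n → ℝ) : Prop := ∃! i, |a i| = ‖a‖

/-- Chebyshev norm of the residual `A - u vᵀ`. -/
noncomputable def Cerr {m n : ℕ} (A : Fin m → Fin n → ℝ) (u : Fin m → ℝ) (v : Fin n → ℝ) : ℝ :=
  ⨆ i, ⨆ j, |A i j - u i * v j|

/-- Chebyshev norm of a matrix. -/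
noncomputable def CnormM {m n : ℕ} (A : Fin m → Fin n → ℝ) : ℝ :=
  ⨆ i, ⨆ j, |A i j|

/-- The sequence `v⁽ᵏ⁾` of the alternating minimization method started at `v0`. -/
noncomputable def vseq {m n : ℕ} (A : Fin m → Fin n → ℝ) (v0 : Fin n → ℝ) : ℕ → Fin n → ℝ
  | 0 => v0
  | k + 1 => psi A (phi A (vseq A v0 k))

private lemma sign_one_iff (x : ℝ) : Real.sign x = 1 ↔ 0 < x := by
  constructor
  · intro h
    rcases lt_trichotomy x 0 with hx|hx|hx
    · rw [Real.sign_of_neg hx] at h; norm_num at h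
    · rw [hx, Real.sign_zero] at h; norm_num at h
    · exact hx
  · exact Real.sign_of_pos

private lemma sign_neg_one_iff (x : ℝ) : Real.sign x = -1 ↔ x < 0 := by
  constructor
  · intro h
    rcases lt_trichotomy x 0 with hx|hx|hx
    · exact hx
    · rw [hx, Real.sign_zero] at h; norm_num at h
    · rw [Real.sign_of_pos hx] at h; norm_num at h
  · exact Real.sign_of_neg

private lemma aux_lt (x c ε M : ℝ) (hM : |x| ≤ M) (hcx : 0 < c * x) (hε : 0 < ε)
    (hεc : ε * |c| ≤ |x|) : |x - ε * c| < M := by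
  rcases abs_cases (x - ε * c) with ⟨h1, _⟩|⟨h1, _⟩ <;>
    rcases abs_cases x with ⟨h2, _⟩|⟨h2, _⟩ <;>
    rcases abs_cases c with ⟨h3, _⟩|⟨h3, _⟩ <;>
    rw [h2, h3] at hεc <;> rw [h1] <;> nlinarith

private lemma aux_ge1 (x c δ : ℝ) (hcx : 0 < c * x) (hδ : δ ≤ 0) : |x| ≤ |x - δ * c| := by
  rcases abs_cases (x - δ * c) with ⟨h1, _⟩|⟨h1, _⟩ <;>
    rcases abs_cases x with ⟨h2, _⟩|⟨h2, _⟩ <;>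
    rcases le_or_gt c 0 with h3|h3 <;> rw [h1, h2] <;> nlinarith

private lemma aux_ge2 (x c δ : ℝ) (hcx : c * x < 0) (hδ : 0 ≤ δ) : |x| ≤ |x - δ * c| := by
  have := aux_ge1 x (-c) (-δ) (by nlinarith) (by linarith)
  simpa using this


theorem stmt1 {n : ℕ} (hn : 2 ≤ n) (a v : Fin n → ℝ) (hv : Cheb v) (u : ℝ) :
    (∀ t : ℝ, ‖a - u • v‖ ≤ ‖a - t • v‖) ↔
      ∃ i j : Fin n, i ≠ j ∧
        |a i - u * v i| = ‖a - u • v‖ ∧ |a j - u * v j| = ‖a - u • v‖ ∧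
        Real.sign (v i * (a i - u * v i)) = -Real.sign (v j * (a j - u * v j)) := by
  have h2 : 0 < n := by omega
  have hne : (Finset.univ : Finset (Fin n)).Nonempty := ⟨⟨0, h2⟩, Finset.mem_univ _⟩
  set r : Fin n → ℝ := fun i => a i - u * v i with hr
  have hcomp : ∀ t : ℝ, ∀ i : Fin n, (a - t • v) i = a i - t * v i := by
    intro t i; simp [smul_eq_mul]
  set M := ‖a - u • v‖ with hM
  have hMnn : 0 ≤ M := norm_nonneg _
  have hle : ∀ i, |r i| ≤ M := by
    intro i
    have h := norm_le_pi_norm (a - u • v) i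
    rwa [Real.norm_eq_abs, hcomp] at h
  constructor
  · intro hmin
    by_cases hM0 : M = 0
    · have hz : ∀ i, r i = 0 := fun i =>
        abs_eq_zero.mp (le_antisymm (hM0 ▸ hle i) (abs_nonneg _))
      refine ⟨⟨0, by omega⟩, ⟨1, by omega⟩, by simp [Fin.ext_iff], ?_, ?_, ?_⟩
      · show |r _| = M; rw [hz, hM0, abs_zero]
      · show |r _| = M; rw [hz, hM0, abs_zero]
      · show Real.sign (v _ * r _) = -Real.sign (v _ * r _)
        rw [hz, hz, mul_zero, mul_zero, Real.sign_zero, neg_zero]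
    · have hMpos : 0 < M := lt_of_le_of_ne hMnn (Ne.symm hM0)
      obtain ⟨i0, -, hi0max⟩ :=
        Finset.exists_max_image Finset.univ (fun i => |r i|) hne
      have hi0 : |r i0| = M := by
        refine le_antisymm (hle i0) ?_
        rw [hM]
        exact (pi_norm_le_iff_of_nonneg (abs_nonneg _)).mpr fun i => by
          rw [Real.norm_eq_abs, hcomp]; exact hi0max i (Finset.mem_univ i)
      by_contra hcon
      push_neg at hcon
      have hrne : ∀ i, |r i| = M → r i ≠ 0 := by
        intro i hi h0; rw [h0, abs_zero] at hi; exact hM0 hi.symm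
      obtain ⟨d, hd0, hd1⟩ : ∃ d : ℝ, Real.sign (v i0 * r i0) = d ∧ (d = 1 ∨ d = -1) := by
        refine ⟨Real.sign (v i0 * r i0), rfl, ?_⟩
        rcases lt_trichotomy (v i0 * r i0) 0 with h|h|h
        · right; exact Real.sign_of_neg h
        · exact absurd h (mul_ne_zero (hv i0) (hrne i0 hi0))
        · left; exact Real.sign_of_pos h
      have hdabs : |d| = 1 := by rcases hd1 with h|h <;> rw [h] <;> norm_num
      have hclaim : ∀ i, |r i| = M → 0 < (d * v i) * r i := by
        intro i hi
        have hvr : v i * r i ≠ 0 := mul_ne_zero (hv i) (hrne i hi)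
        have hsame : Real.sign (v i * r i) = d := by
          by_contra hne'
          have hsi : Real.sign (v i * r i) = 1 ∨ Real.sign (v i * r i) = -1 := by
            rcases lt_trichotomy (v i * r i) 0 with h|h|h
            · right; exact Real.sign_of_neg h
            · exact absurd h hvr
            · left; exact Real.sign_of_pos h
          have hopp : Real.sign (v i * r i) = -d := by
            rcases hsi with h|h <;> rcases hd1 with h'|h' <;>
              rw [h, h'] <;> norm_num <;> exact absurd (h.trans h'.symm) hne'
          have hii0 : i ≠ i0 := by
            intro h; rw [h, hd0] at hne'; exact hne' rfl
          exact hcon i i0 hii0 hi hi0 (by rw [hopp, hd0])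
        rcases hd1 with h|h
        · rw [h, one_mul]; exact (sign_one_iff _).mp (h ▸ hsame)
        · have hneg : v i * r i < 0 := (sign_neg_one_iff _).mp (h ▸ hsame)
          rw [h]; nlinarith
      set ε : ℝ := Finset.univ.inf' hne
        (fun i => if |r i| = M then M / |v i| else (M - |r i|) / (2 * |v i|)) with hεdef
      have hvabs : ∀ i : Fin n, 0 < |v i| := fun i => abs_pos.mpr (hv i)
      have hεpos : 0 < ε := by
        rw [hεdef, Finset.lt_inf'_iff]
        intro i _
        by_cases h : |r i| = M
        · rw [if_pos h]; exact div_pos hMpos (hvabs i)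
        · rw [if_neg h]
          have hlt' : |r i| < M := lt_of_le_of_ne (hle i) h
          have hgt : 0 < M - |r i| := by linarith
          exact div_pos hgt (mul_pos (by norm_num) (abs_pos.mpr (hv i)))
      have hεle : ∀ i : Fin n, ε ≤ if |r i| = M then M / |v i| else (M - |r i|) / (2 * |v i|) :=
        fun i => Finset.inf'_le _ (Finset.mem_univ i)
      have hlt : ‖a - (u + ε * d) • v‖ < M := by
        rw [pi_norm_lt_iff hMpos]
        intro i
        rw [Real.norm_eq_abs, hcomp]
        have heq : a i - (u + ε * d) * v i = r i - ε * (d * v i) := by rw [hr]; ring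
        rw [heq]
        by_cases h : |r i| = M
        · refine aux_lt _ _ _ _ (hle i) (hclaim i h) hεpos ?_
          rw [abs_mul, hdabs, one_mul]
          have h1 := hεle i
          rw [if_pos h] at h1
          rw [h]
          calc ε * |v i| ≤ M / |v i| * |v i| :=
                mul_le_mul_of_nonneg_right h1 (abs_nonneg _)
            _ = M := div_mul_cancel₀ _ (ne_of_gt (hvabs i))
        · have h1 := hεle i
          rw [if_neg h] at h1
          have hlt' : |r i| < M := lt_of_le_of_ne (hle i) h
          have h3 : ε * |v i| ≤ (M - |r i|) / 2 := by
            have h4 := mul_le_mul_of_nonneg_right h1 (le_of_lt (hvabs i))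
            rw [div_mul_eq_mul_div, mul_comm 2 |v i|, ← div_div,
              mul_div_assoc, div_self (ne_of_gt (hvabs i)), mul_one] at h4
            linarith
          calc |r i - ε * (d * v i)| ≤ |r i| + |ε * (d * v i)| := abs_sub _ _
            _ = |r i| + ε * |v i| := by
                rw [abs_mul, abs_mul, hdabs, one_mul, abs_of_pos hεpos]
            _ < M := by linarith
      exact absurd (hmin (u + ε * d)) (not_le.mpr hlt)
  · rintro ⟨i, j, hij, hi, hj, hsign⟩ t
    by_cases hM0 : M = 0
    · rw [hM0]; exact norm_nonneg _
    · have hMpos : 0 < M := lt_of_le_of_ne hMnn (Ne.symm hM0)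
      have hri : r i ≠ 0 := by
        intro h0; rw [show a i - u * v i = r i from rfl, h0, abs_zero] at hi
        exact hM0 hi.symm
      have hrj : r j ≠ 0 := by
        intro h0; rw [show a j - u * v j = r j from rfl, h0, abs_zero] at hj
        exact hM0 hj.symm
      have hvi : v i * r i ≠ 0 := mul_ne_zero (hv i) hri
      have hkey : ∀ k : Fin n, |r k| = M → M ≤ |r k - (t - u) * v k| →
          M ≤ ‖a - t • v‖ := by
        intro k hk h
        have h2' := norm_le_pi_norm (a - t • v) k
        rw [Real.norm_eq_abs, hcomp] at h2'
        have heq : a k - t * v k = r k - (t - u) * v k := by rw [hr]; ring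
        rw [heq] at h2'
        linarith
      rcases lt_trichotomy (v i * r i) 0 with hc|hc|hc
      · have hsj : 0 < v j * r j := by
          rw [show v i * (a i - u * v i) = v i * r i from rfl,
            Real.sign_of_neg hc] at hsign
          have hs1 : Real.sign (v j * r j) = 1 := by linarith [hsign]
          exact (sign_one_iff _).mp hs1
        rcases le_or_gt (t - u) 0 with hδ|hδ
        · exact hkey j hj (hj ▸ aux_ge1 (r j) (v j) (t - u) hsj hδ)
        · exact hkey i hi (hi ▸ aux_ge2 (r i) (v i) (t - u) hc (le_of_lt hδ))
      · exact absurd hc hvi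
      · have hsj : v j * r j < 0 := by
          rw [show v i * (a i - u * v i) = v i * r i from rfl,
            Real.sign_of_pos hc] at hsign
          have hs1 : Real.sign (v j * r j) = -1 := by linarith [hsign]
          exact (sign_neg_one_iff _).mp hs1
        rcases le_or_gt (t - u) 0 with hδ|hδ
        · exact hkey i hi (hi ▸ aux_ge1 (r i) (v i) (t - u) hc hδ)
        · exact hkey j hj (hj ▸ aux_ge2 (r j) (v j) (t - u) hsj (le_of_lt hδ))
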